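/- Let a ∈ (0,1). Then lim_{t→∞} ( Σ_{j=1}^∞ (1 − e^{−a^j t})² ) / log t = −1/log a. (The series converges for every t > 0.) -/
import Mathlib
set_option maxHeartbeats 1000000


open Filter Topology

lemma aux14_g_le_sq {x : ℝ} (hx : 0 ≤ x) : (1 - Real.exp (-x)) ^ 2 ≤ x ^ 2 := by
  have h1 : 0 ≤ 1 - Real.exp (-x) := by
    have := Real.exp_le_one_iff.mpr (neg_nonpos.mpr hx)
    linarith
  have h2 : 1 - Real.exp (-x) ≤ x := by
    have := Real.add_one_le_exp (-x)
    linarith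
  exact pow_le_pow_left₀ h1 h2 2

lemma aux14_summable (a t : ℝ) (ha0 : 0 < a) (ha1 : a < 1) (ht : 0 < t) :
    Summable (fun j : ℕ => (1 - Real.exp (-(a ^ (j + 1) * t))) ^ 2) := by
  have ha2 : a ^ 2 < 1 := by nlinarith
  have hs : Summable (fun j : ℕ => (a ^ 2 * t ^ 2) * (a ^ 2) ^ j) :=
    (summable_geometric_of_lt_one (by positivity) ha2).mul_left _
  refine hs.of_nonneg_of_le (fun j => sq_nonneg _) (fun j => ?_)
  have hx : 0 ≤ a ^ (j + 1) * t := by positivity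
  calc (1 - Real.exp (-(a ^ (j + 1) * t))) ^ 2 ≤ (a ^ (j + 1) * t) ^ 2 := aux14_g_le_sq hx
    _ = a ^ 2 * t ^ 2 * (a ^ 2) ^ j := by ring

theorem stmt14 (a : ℝ) (ha0 : 0 < a) (ha1 : a < 1) :
    (∀ t > 0, Summable (fun j : ℕ => (1 - Real.exp (-(a ^ (j + 1) * t))) ^ 2)) ∧
    Tendsto (fun t : ℝ => (∑' j : ℕ, (1 - Real.exp (-(a ^ (j + 1) * t))) ^ 2) / Real.log t)
      atTop (𝓝 (-1 / Real.log a)) := by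
  have hla : Real.log a < 0 := Real.log_neg ha0 ha1
  have hla' : 0 < -Real.log a := by linarith
  have ha2 : a ^ 2 < 1 := by nlinarith
  set c : ℝ := a⁻¹ - 1 with hc
  have hc0 : 0 < c := by
    have : 1 < a⁻¹ := (one_lt_inv₀ ha0).mpr ha1
    simp [hc]; linarith
  set r : ℝ := Real.exp (-c) with hr
  have hr0 : 0 ≤ r := (Real.exp_pos _).le
  have hr1 : r < 1 := Real.exp_lt_one_iff.mpr (by linarith)
  set B : ℝ := Real.exp (-1) * (1 - r)⁻¹ with hB
  set D : ℝ := (1 - a ^ 2)⁻¹ with hD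
  refine ⟨fun t ht => aux14_summable a t ha0 ha1 ht, ?_⟩
  -- squeeze
  have key : ∀ t : ℝ, Real.exp 1 ≤ t →
      (Real.log t / (-Real.log a) - 1 - 2 * B ≤
        ∑' j : ℕ, (1 - Real.exp (-(a ^ (j + 1) * t))) ^ 2) ∧
      ((∑' j : ℕ, (1 - Real.exp (-(a ^ (j + 1) * t))) ^ 2) ≤
        Real.log t / (-Real.log a) + D) := by
    intro t htE
    have ht0 : 0 < t := lt_of_lt_of_le (Real.exp_pos 1) htE
    have hlt1 : 1 ≤ Real.log t := (Real.le_log_iff_exp_le ht0).mpr htE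
    set x : ℝ := Real.log t / (-Real.log a) with hxdef
    have hx0 : 0 ≤ x := by positivity
    set L : ℕ := ⌊x⌋₊ with hL
    have hL1 : (L : ℝ) ≤ x := Nat.floor_le hx0
    have hL2 : x < L + 1 := Nat.lt_floor_add_one x
    -- a^L * t ≥ 1
    have h1 : 1 ≤ a ^ L * t := by
      have h : (L : ℝ) * (-Real.log a) ≤ Real.log t := by
        rw [← le_div_iff₀ hla']; exact hL1
      have h' : Real.exp ((L : ℝ) * (-Real.log a)) ≤ t := by
        calc Real.exp ((L : ℝ) * (-Real.log a)) ≤ Real.exp (Real.log t) :=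
              Real.exp_le_exp.mpr h
          _ = t := Real.exp_log ht0
      have he : Real.exp ((L : ℝ) * (-Real.log a)) = (a ^ L)⁻¹ := by
        rw [Real.exp_nat_mul, Real.exp_neg, Real.exp_log ha0, inv_pow]
      rw [he] at h'
      have hpos : (0:ℝ) < a ^ L := by positivity
      calc (1:ℝ) = a ^ L * (a ^ L)⁻¹ := (mul_inv_cancel₀ (ne_of_gt hpos)).symm
        _ ≤ a ^ L * t := by
            exact mul_le_mul_of_nonneg_left h' hpos.le
    -- a^(L+1) * t ≤ 1
    have h2 : a ^ (L + 1) * t ≤ 1 := by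
      have h : Real.log t ≤ ((L : ℝ) + 1) * (-Real.log a) := by
        rw [← div_le_iff₀ hla']; exact hL2.le
      have h' : t ≤ Real.exp (((L : ℝ) + 1) * (-Real.log a)) := by
        calc t = Real.exp (Real.log t) := (Real.exp_log ht0).symm
          _ ≤ _ := Real.exp_le_exp.mpr h
      have he : Real.exp (((L : ℝ) + 1) * (-Real.log a)) = (a ^ (L + 1))⁻¹ := by
        rw [show ((L : ℝ) + 1) = ((L + 1 : ℕ) : ℝ) by push_cast; ring,
          Real.exp_nat_mul, Real.exp_neg, Real.exp_log ha0, inv_pow]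
      rw [he] at h'
      have hpos : (0:ℝ) < a ^ (L + 1) := by positivity
      calc a ^ (L + 1) * t ≤ a ^ (L + 1) * (a ^ (L + 1))⁻¹ :=
            mul_le_mul_of_nonneg_left h' hpos.le
        _ = 1 := mul_inv_cancel₀ (ne_of_gt hpos)
    set f : ℕ → ℝ := fun j => (1 - Real.exp (-(a ^ (j + 1) * t))) ^ 2 with hf
    have hsum : Summable f := aux14_summable a t ha0 ha1 ht0
    have hsplit : ∑ i ∈ Finset.range L, f i + ∑' i : ℕ, f (i + L) = ∑' i : ℕ, f i :=
      Summable.sum_add_tsum_nat_add L hsum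
    constructor
    · -- lower bound
      have hlow1 : (L : ℝ) - 2 * B ≤ ∑ i ∈ Finset.range L, f i := by
        have hterm : ∀ i ∈ Finset.range L,
            1 - 2 * Real.exp (-(a⁻¹ ^ (L - 1 - i))) ≤ f i := by
          intro i hi
          have hiL : i < L := Finset.mem_range.mp hi
          have hadd : (i + 1) + (L - 1 - i) = L := by omega
          have hgeq : a⁻¹ ^ (L - 1 - i) ≤ a ^ (i + 1) * t := by
            have hpw : a ^ (i + 1) * a ^ (L - 1 - i) = a ^ L := by
              rw [← pow_add, hadd]
            have hpos : (0:ℝ) < a ^ (L - 1 - i) := by positivity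
            have key2 : 1 ≤ (a ^ (i + 1) * t) * a ^ (L - 1 - i) := by
              calc (1:ℝ) ≤ a ^ L * t := h1
                _ = (a ^ (i + 1) * t) * a ^ (L - 1 - i) := by rw [← hpw]; ring
            rw [inv_pow, inv_eq_one_div, div_le_iff₀ hpos]
            exact key2
          have hexp : Real.exp (-(a ^ (i + 1) * t)) ≤ Real.exp (-(a⁻¹ ^ (L - 1 - i))) :=
            Real.exp_le_exp.mpr (by linarith)
          have hexpand : f i = 1 - 2 * Real.exp (-(a ^ (i + 1) * t))
              + (Real.exp (-(a ^ (i + 1) * t))) ^ 2 := by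
            simp only [hf]; ring
          nlinarith [sq_nonneg (Real.exp (-(a ^ (i + 1) * t)))]
        have hsum1 : ∑ i ∈ Finset.range L, (1 - 2 * Real.exp (-(a⁻¹ ^ (L - 1 - i))))
            ≤ ∑ i ∈ Finset.range L, f i := Finset.sum_le_sum hterm
        have hrefl : ∑ i ∈ Finset.range L, Real.exp (-(a⁻¹ ^ (L - 1 - i)))
            = ∑ m ∈ Finset.range L, Real.exp (-(a⁻¹ ^ m)) :=
          Finset.sum_range_reflect (fun m => Real.exp (-(a⁻¹ ^ m))) L
        have hsmall : ∑ m ∈ Finset.range L, Real.exp (-(a⁻¹ ^ m)) ≤ B := by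
          have hterm2 : ∀ m ∈ Finset.range L,
              Real.exp (-(a⁻¹ ^ m)) ≤ Real.exp (-1) * r ^ m := by
            intro m _
            have hbern : 1 + (m : ℝ) * c ≤ a⁻¹ ^ m := by
              have := one_add_mul_le_pow (a := c) (by linarith) m
              simpa [hc] using this
            calc Real.exp (-(a⁻¹ ^ m)) ≤ Real.exp (-(1 + (m : ℝ) * c)) :=
                  Real.exp_le_exp.mpr (by linarith)
              _ = Real.exp (-1) * r ^ m := by
                  rw [hr, ← Real.exp_nat_mul, ← Real.exp_add]; ring_nf
          calc ∑ m ∈ Finset.range L, Real.exp (-(a⁻¹ ^ m))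
              ≤ ∑ m ∈ Finset.range L, Real.exp (-1) * r ^ m := Finset.sum_le_sum hterm2
            _ = Real.exp (-1) * ∑ m ∈ Finset.range L, r ^ m := by
                rw [Finset.mul_sum]
            _ ≤ Real.exp (-1) * (1 - r)⁻¹ := by
                refine mul_le_mul_of_nonneg_left ?_ (Real.exp_pos _).le
                calc ∑ m ∈ Finset.range L, r ^ m ≤ ∑' m : ℕ, r ^ m :=
                      Summable.sum_le_tsum _ (fun m _ => by positivity)
                        (summable_geometric_of_lt_one hr0 hr1)
                  _ = (1 - r)⁻¹ := tsum_geometric_of_lt_one hr0 hr1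
            _ = B := hB.symm
        have : (L : ℝ) - 2 * B ≤ ∑ i ∈ Finset.range L,
            (1 - 2 * Real.exp (-(a⁻¹ ^ (L - 1 - i)))) := by
          rw [Finset.sum_sub_distrib, Finset.sum_const, ← Finset.mul_sum, hrefl]
          simp only [Finset.card_range, nsmul_eq_mul, mul_one]
          nlinarith
        linarith
      have htail : 0 ≤ ∑' i : ℕ, f (i + L) := tsum_nonneg (fun i => sq_nonneg _)
      have : (L : ℝ) - 2 * B ≤ ∑' i : ℕ, f i := by
        rw [← hsplit]; linarith
      calc x - 1 - 2 * B ≤ (L : ℝ) - 2 * B := by linarith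
        _ ≤ _ := this
    · -- upper bound
      have hup1 : ∑ i ∈ Finset.range L, f i ≤ (L : ℝ) := by
        calc ∑ i ∈ Finset.range L, f i ≤ ∑ i ∈ Finset.range L, 1 := by
              refine Finset.sum_le_sum (fun i _ => ?_)
              have he1 : Real.exp (-(a ^ (i + 1) * t)) ≤ 1 :=
                Real.exp_le_one_iff.mpr (neg_nonpos.mpr (by positivity))
              have he0 : 0 < Real.exp (-(a ^ (i + 1) * t)) := Real.exp_pos _
              simp only [hf]
              nlinarith
          _ = (L : ℝ) := by simp
      have hup2 : ∑' i : ℕ, f (i + L) ≤ D := by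
        have hterm : ∀ i : ℕ, f (i + L) ≤ (a ^ 2) ^ i := by
          intro i
          have hx1 : 0 ≤ a ^ (i + L + 1) * t := by positivity
          have heq : a ^ (i + L + 1) * t = a ^ i * (a ^ (L + 1) * t) := by
            rw [show i + L + 1 = i + (L + 1) by omega, pow_add]; ring
          have hy1 : 0 ≤ a ^ (L + 1) * t := by positivity
          calc f (i + L) ≤ (a ^ (i + L + 1) * t) ^ 2 := aux14_g_le_sq hx1
            _ = (a ^ i) ^ 2 * (a ^ (L + 1) * t) ^ 2 := by rw [heq]; ring
            _ ≤ (a ^ i) ^ 2 * 1 :=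
                mul_le_mul_of_nonneg_left (pow_le_one₀ hy1 h2) (sq_nonneg _)
            _ = (a ^ 2) ^ i := by ring
        calc ∑' i : ℕ, f (i + L) ≤ ∑' i : ℕ, (a ^ 2) ^ i :=
              Summable.tsum_le_tsum hterm ((summable_nat_add_iff L).mpr hsum)
                (summable_geometric_of_lt_one (by positivity) ha2)
          _ = (1 - a ^ 2)⁻¹ := tsum_geometric_of_lt_one (by positivity) ha2
          _ = D := hD.symm
      have : ∑' i : ℕ, f i ≤ (L : ℝ) + D := by rw [← hsplit]; linarith
      calc ∑' i : ℕ, f i ≤ (L : ℝ) + D := this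
        _ ≤ x + D := by linarith
  -- now the squeeze
  have hlim : -1 / Real.log a = (-Real.log a)⁻¹ := by
    rw [inv_neg, neg_div, one_div]
  rw [hlim]
  refine tendsto_of_tendsto_of_tendsto_of_le_of_le'
    (g := fun t => (-Real.log a)⁻¹ + (-(1 + 2 * B)) / Real.log t)
    (h := fun t => (-Real.log a)⁻¹ + D / Real.log t) ?_ ?_ ?_ ?_
  · have := (tendsto_const_nhds (x := -(1 + 2 * B)) (f := atTop (α := ℝ))).div_atTop
      Real.tendsto_log_atTop
    simpa using (tendsto_const_nhds.add this)
  · have := (tendsto_const_nhds (x := D) (f := atTop (α := ℝ))).div_atTop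
      Real.tendsto_log_atTop
    simpa using (tendsto_const_nhds.add this)
  · filter_upwards [eventually_ge_atTop (Real.exp 1)] with t htE
    have ht0 : 0 < t := lt_of_lt_of_le (Real.exp_pos 1) htE
    have hlt1 : 1 ≤ Real.log t := (Real.le_log_iff_exp_le ht0).mpr htE
    have hlt0 : 0 < Real.log t := by linarith
    have hk := (key t htE).1
    have : (Real.log t / (-Real.log a) - 1 - 2 * B) / Real.log t
        = (-Real.log a)⁻¹ + (-(1 + 2 * B)) / Real.log t := by
      field_simp
      ring
    rw [← this]
    exact (div_le_div_iff_of_pos_right hlt0).mpr hk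
  · filter_upwards [eventually_ge_atTop (Real.exp 1)] with t htE
    have ht0 : 0 < t := lt_of_lt_of_le (Real.exp_pos 1) htE
    have hlt1 : 1 ≤ Real.log t := (Real.le_log_iff_exp_le ht0).mpr htE
    have hlt0 : 0 < Real.log t := by linarith
    have hk := (key t htE).2
    have heq : (Real.log t / (-Real.log a) + D) / Real.log t
        = (-Real.log a)⁻¹ + D / Real.log t := by
      field_simp
    rw [← heq]
    exact (div_le_div_iff_of_pos_right hlt0).mpr hk
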